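/- If f : ℝ^d → ℝ is continuously differentiable and its gradient is L-Lipschitz on a compact convex set M with respect to a norm ‖·‖ (in dual pairing), then the curvature constant C_f of f over M satisfies C_f ≤ L · diam(M)², where diam(M) is the diameter of M in the norm ‖·‖. -/

import Mathlib

set_option maxHeartbeats 1000000

open RealInnerProductSpace

variable {d : ℕ}

local notation "E" => EuclideanSpace ℝ (Fin d)

lemma descent (f : E → ℝ) (hf : ContDiff ℝ 1 f) (L : ℝ) (x v : E)
    (hLip : ∀ t ∈ Set.Icc (0:ℝ) 1,
      ‖gradient f (x + t • v) - gradient f x‖ ≤ L * (t * ‖v‖)) :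
    f (x + v) - f x - ⟪gradient f x, v⟫ ≤ L * ‖v‖ ^ 2 / 2 := by
  have hdiff : Differentiable ℝ f := hf.differentiable one_ne_zero
  have hgradcont : Continuous (fun z : E => gradient f z) := by
    have : Continuous (fun z : E => fderiv ℝ f z) := hf.continuous_fderiv one_ne_zero
    exact (InnerProductSpace.toDual ℝ E).symm.continuous.comp this
  have hderiv : ∀ t : ℝ, HasDerivAt (fun t : ℝ => f (x + t • v))
      ⟪gradient f (x + t • v), v⟫ t := by
    intro t
    have hline : HasDerivAt (fun t : ℝ => x + t • v) v t := by
      simpa using ((hasDerivAt_id t).smul_const v).const_add x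
    have hfd := (hdiff (x + t • v)).hasGradientAt.hasFDerivAt
    have := hfd.comp_hasDerivAt t hline
    simpa only [InnerProductSpace.toDual_apply_apply, Function.comp_def] using this
  have hcont : Continuous fun t : ℝ => ⟪gradient f (x + t • v), v⟫ := by
    apply Continuous.inner
    · exact hgradcont.comp (by continuity)
    · exact continuous_const
  have hint : ∫ t in (0:ℝ)..1, ⟪gradient f (x + t • v), v⟫ = f (x + v) - f x := by
    have := intervalIntegral.integral_eq_sub_of_hasDerivAt
      (f := fun t : ℝ => f (x + t • v)) (fun t _ => hderiv t)
      (hcont.intervalIntegrable 0 1)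
    simpa using this
  have hcont2 : Continuous fun t : ℝ => ⟪gradient f (x + t • v) - gradient f x, v⟫ := by
    simp only [inner_sub_left]
    exact hcont.sub continuous_const
  have hsub : ∫ t in (0:ℝ)..1, ⟪gradient f (x + t • v) - gradient f x, v⟫
      = f (x + v) - f x - ⟪gradient f x, v⟫ := by
    have h1 : ∫ t in (0:ℝ)..1, ⟪gradient f (x + t • v) - gradient f x, v⟫
        = (∫ t in (0:ℝ)..1, ⟪gradient f (x + t • v), v⟫)
          - ∫ t in (0:ℝ)..1, ⟪gradient f x, v⟫ := by
      simp only [inner_sub_left]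
      exact intervalIntegral.integral_sub (hcont.intervalIntegrable 0 1)
        intervalIntegrable_const
    rw [h1, hint]
    simp
  rw [← hsub]
  have hbound : ∫ t in (0:ℝ)..1, ⟪gradient f (x + t • v) - gradient f x, v⟫
      ≤ ∫ t in (0:ℝ)..1, L * (t * ‖v‖) * ‖v‖ := by
    apply intervalIntegral.integral_mono_on (by norm_num)
    · exact hcont2.intervalIntegrable 0 1
    · exact (Continuous.intervalIntegrable (by continuity) 0 1)
    · intro t ht
      calc ⟪gradient f (x + t • v) - gradient f x, v⟫
          ≤ ‖gradient f (x + t • v) - gradient f x‖ * ‖v‖ := real_inner_le_norm _ _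
        _ ≤ L * (t * ‖v‖) * ‖v‖ := by
            have := hLip t ht
            nlinarith [norm_nonneg v]
  have hcalc : ∫ t in (0:ℝ)..1, L * (t * ‖v‖) * ‖v‖ = L * ‖v‖ ^ 2 / 2 := by
    simp only [show ∀ t : ℝ, L * (t * ‖v‖) * ‖v‖ = (L * ‖v‖ ^ 2) * t by intro t; ring]
    rw [intervalIntegral.integral_const_mul]
    rw [integral_id]
    ring
  calc _ ≤ _ := hbound
    _ = _ := hcalc

/-- If `f` is C¹ with `L`-Lipschitz gradient on a compact convex set `M`,
then the curvature constant `C_f` over `M` satisfies `C_f ≤ L ⬝ diam(M)²`. -/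
theorem frankWolfe_curvature_le_lipschitz_diam_sq {d : ℕ}
    (f : EuclideanSpace ℝ (Fin d) → ℝ) (M : Set (EuclideanSpace ℝ (Fin d))) (L : ℝ)
    (hMcp : IsCompact M) (hMcv : Convex ℝ M)
    (hf : ContDiff ℝ 1 f) (hL : 0 ≤ L)
    (hlip : ∀ x ∈ M, ∀ y ∈ M, ‖gradient f x - gradient f y‖ ≤ L * ‖x - y‖) :
    sSup {c : ℝ | ∃ x ∈ M, ∃ s ∈ M, ∃ γ ∈ Set.Ioc (0:ℝ) 1,
        c = 2 / γ ^ 2 *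
          (f (x + γ • (s - x)) - f x - ⟪gradient f x, γ • (s - x)⟫)} ≤
      L * Metric.diam M ^ 2 := by
  have hdiam : 0 ≤ Metric.diam M := Metric.diam_nonneg
  apply Real.sSup_le
  · rintro c ⟨x, hx, s, hs, γ, hγ, rfl⟩
    have hγ0 : 0 < γ := hγ.1
    have hγ1 : γ ≤ 1 := hγ.2
    set v := γ • (s - x) with hv
    have hLipv : ∀ t ∈ Set.Icc (0:ℝ) 1,
        ‖gradient f (x + t • v) - gradient f x‖ ≤ L * (t * ‖v‖) := by
      intro t ht
      have htγ0 : 0 ≤ t * γ := mul_nonneg ht.1 hγ0.le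
      have htγ1 : t * γ ≤ 1 := by nlinarith [ht.2]
      have hmem : x + t • v ∈ M := by
        have heq : x + t • v = (1 - t * γ) • x + (t * γ) • s := by
          rw [hv, smul_smul, smul_sub, sub_smul, one_smul]
          abel
        rw [heq]
        exact hMcv hx hs (by linarith) htγ0 (by ring)
      have := hlip _ hmem x hx
      simpa [norm_smul, abs_of_nonneg ht.1, mul_comm] using this
    have key := descent f hf L x v hLipv
    have hnv : ‖v‖ = γ * ‖s - x‖ := by
      rw [hv, norm_smul, Real.norm_eq_abs, abs_of_pos hγ0]
    have hsx : ‖s - x‖ ≤ Metric.diam M := by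
      rw [← dist_eq_norm]
      exact Metric.dist_le_diam_of_mem hMcp.isBounded hs hx
    calc 2 / γ ^ 2 * (f (x + γ • (s - x)) - f x - ⟪gradient f x, γ • (s - x)⟫)
        ≤ 2 / γ ^ 2 * (L * ‖v‖ ^ 2 / 2) :=
          mul_le_mul_of_nonneg_left key (by positivity)
      _ = L * ‖s - x‖ ^ 2 := by
          rw [hnv]
          field_simp
      _ ≤ L * Metric.diam M ^ 2 := by
          apply mul_le_mul_of_nonneg_left _ hL
          exact pow_le_pow_left₀ (norm_nonneg _) hsx 2
  · positivity
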